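/- Let H be a complex Hilbert space, let A and B be bounded self-adjoint operators on H, and let T be any bounded operator on H. Then for every t ∈ ℝ, ‖e^{−itA} T − T e^{−itB}‖ ≤ |t| · ‖A T − T B‖. -/

import Mathlib

open NormedSpace

private lemma duhamel_aux {R : Type*} [Ring R] [Module ℂ R] [SMulCommClass ℂ R R]
    [IsScalarTower ℂ R R] (U V A B T : R) :
    ((-Complex.I) • (U * A)) * (T * V) + U * (T * (Complex.I • (B * V)))
      = (-Complex.I) • (U * ((A * T - T * B) * V)) := by
  simp only [smul_mul_assoc, mul_smul_comm, neg_smul, mul_sub, sub_mul, smul_sub]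
  rw [sub_eq_add_neg, neg_neg]
  congr 2 <;> noncomm_ring

/-- Duhamel estimate: for bounded self-adjoint `A`, `B` and any bounded `T`,
`‖e^{-itA} T - T e^{-itB}‖ ≤ |t| ‖AT - TB‖`. -/
theorem duhamel_intertwining_estimate
    {H : Type*} [NormedAddCommGroup H] [InnerProductSpace ℂ H] [CompleteSpace H]
    (A B T : H →L[ℂ] H) (hA : IsSelfAdjoint A) (hB : IsSelfAdjoint B) (t : ℝ) :
    ‖exp ((-(Complex.I * t)) • A) * T - T * exp ((-(Complex.I * t)) • B)‖ ≤
      |t| * ‖A * T - T * B‖ := by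
  letI : NormedAlgebra ℚ (H →L[ℂ] H) := NormedAlgebra.restrictScalars ℚ ℂ _
  set D : H →L[ℂ] H := A * T - T * B with hD
  -- skew-adjointness of the generators
  have hIskew : ∀ s : ℝ, -(Complex.I * (s : ℂ)) ∈ skewAdjoint ℂ := by
    intro s
    rw [skewAdjoint.mem_iff]
    simp [Complex.ext_iff]
  have hIskew' : ∀ s : ℝ, (Complex.I * (s : ℂ)) ∈ skewAdjoint ℂ := by
    intro s
    rw [skewAdjoint.mem_iff]
    simp [Complex.ext_iff]
  have hUA : ∀ s : ℝ, exp ((-(Complex.I * s)) • A) ∈ unitary (H →L[ℂ] H) := fun s =>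
    exp_mem_unitary_of_mem_skewAdjoint (hA.smul_mem_skewAdjoint (hIskew s))
  have hVB : ∀ s : ℝ, exp ((Complex.I * s) • B) ∈ unitary (H →L[ℂ] H) := fun s =>
    exp_mem_unitary_of_mem_skewAdjoint (hB.smul_mem_skewAdjoint (hIskew' s))
  have hWB : ∀ s : ℝ, exp ((-(Complex.I * s)) • B) ∈ unitary (H →L[ℂ] H) := fun s =>
    exp_mem_unitary_of_mem_skewAdjoint (hB.smul_mem_skewAdjoint (hIskew s))
  set f : ℝ → (H →L[ℂ] H) := fun s =>
    exp ((-(Complex.I * s)) • A) * (T * exp ((Complex.I * s) • B)) with hf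
  set g : ℝ → (H →L[ℂ] H) := fun s =>
    (-Complex.I) • (exp ((-(Complex.I * s)) • A) * (D * exp ((Complex.I * s) • B))) with hg
  -- derivative of the scalar functions
  have hscal : ∀ s : ℝ, HasDerivAt (fun s : ℝ => -(Complex.I * (s : ℂ))) (-Complex.I) s := by
    intro s
    simpa [Pi.neg_def] using (((hasDerivAt_id s).ofReal_comp).const_mul Complex.I).neg
  have hscal' : ∀ s : ℝ, HasDerivAt (fun s : ℝ => Complex.I * (s : ℂ)) Complex.I s := by
    intro s
    simpa using ((hasDerivAt_id s).ofReal_comp).const_mul Complex.I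
  have hderiv : ∀ s : ℝ, HasDerivAt f (g s) s := by
    intro s
    have hU : HasDerivAt (fun s : ℝ => exp ((-(Complex.I * s)) • A))
        ((-Complex.I) • (exp ((-(Complex.I * s)) • A) * A)) s := by
      simpa [Function.comp_def] using
        (HasDerivAt.scomp (x := s) (hasDerivAt_exp_smul_const A (-(Complex.I * (s : ℂ))))
          (hscal s))
    have hV : HasDerivAt (fun s : ℝ => exp ((Complex.I * s) • B))
        (Complex.I • (B * exp ((Complex.I * s) • B))) s := by
      simpa [Function.comp_def] using
        (HasDerivAt.scomp (x := s) (hasDerivAt_exp_smul_const' B (Complex.I * (s : ℂ)))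
          (hscal' s))
    have key := hU.mul (hV.const_mul T)
    refine key.congr_deriv ?_
    simp only [hg, hD, mul_assoc]
    exact duhamel_aux _ _ _ _ _
  -- bound the derivative
  have hbound : ∀ s : ℝ, ‖g s‖ ≤ ‖D‖ := by
    intro s
    have h1 : ‖g s‖ = ‖exp ((-(Complex.I * s)) • A) * (D * exp ((Complex.I * s) • B))‖ := by
      rw [hg]
      simp [norm_smul]
    rw [h1, CStarRing.norm_mem_unitary_mul _ (hUA s), CStarRing.norm_mul_mem_unitary _ (hVB s)]
  -- mean value inequality
  have hMVT : ‖f t - f 0‖ ≤ ‖D‖ * ‖t - (0 : ℝ)‖ := by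
    refine Convex.norm_image_sub_le_of_norm_hasDerivWithin_le
      (f' := g) (s := Set.univ) (fun x _ => (hderiv x).hasDerivWithinAt)
      (fun x _ => hbound x) convex_univ (Set.mem_univ 0) (Set.mem_univ t)
  -- relate the goal to f t - f 0
  have hVW : exp ((Complex.I * t) • B) * exp ((-(Complex.I * t)) • B) = 1 := by
    rw [← exp_add_of_commute (((Commute.refl B).smul_left _).smul_right _)]
    simp
  have hkey : exp ((-(Complex.I * t)) • A) * T - T * exp ((-(Complex.I * t)) • B)
      = (f t - f 0) * exp ((-(Complex.I * t)) • B) := by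
    rw [sub_mul, hf]
    simp only [Complex.ofReal_zero, mul_zero, neg_zero, zero_smul, exp_zero, one_mul, mul_assoc,
      hVW, mul_one]
  rw [hkey, CStarRing.norm_mul_mem_unitary _ (hWB t)]
  calc ‖f t - f 0‖ ≤ ‖D‖ * ‖t - (0 : ℝ)‖ := hMVT
    _ = |t| * ‖D‖ := by rw [sub_zero, Real.norm_eq_abs, mul_comm]
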